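/- Let P be a probability measure on ℝ^p and let c : [0,1]^p → ℝ be Lebesgue-integrable. Suppose f ∈ L²(P) satisfies, for P-almost every x, f(x) = ∫_{[0,1]^p} c(t)·h_t(x) dt, where h_t(x) = ∏_{j=1}^p 1(t_j ≤ x_j). Then for every ε > 0 there exist a finite index set K, points t_k ∈ [0,1]^p and coefficients λ_k ∈ ℝ for k ∈ K, such that Σ_{k∈K} |λ_k| ≤ ‖c‖_{L¹([0,1]^p)} and ‖f − Σ_{k∈K} λ_k h_{t_k}‖_{L²(P)} < ε. In other words, f lies in the L²(P)-closure of the set of finite signed combinations of separable indicator products whose coefficient ℓ¹-norm is at most the L¹-norm of the mixed derivative density c. -/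

import Mathlib

open MeasureTheory

/-- The separable indicator product `h_t(x) = ∏_j 1(t_j ≤ x_j)`. -/
noncomputable def sepIndicator (p : ℕ) (t x : Fin p → ℝ) : ℝ :=
  ∏ j, if t j ≤ x j then (1 : ℝ) else 0

/-- The unit cube `[0,1]^p`. -/
def unitBox (p : ℕ) : Set (Fin p → ℝ) := Set.univ.pi fun _ => Set.Icc (0 : ℝ) 1

namespace VCC

open Filter


lemma sep_eq_ite (p : ℕ) (t x : Fin p → ℝ) :
    sepIndicator p t x = if ∀ j, t j ≤ x j then 1 else 0 := by
  unfold sepIndicator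
  split
  · next h => exact Finset.prod_eq_one fun j _ => if_pos (h j)
  · next h =>
      push_neg at h
      obtain ⟨j, hj⟩ := h
      exact Finset.prod_eq_zero (Finset.mem_univ j) (if_neg (not_le.mpr hj))

lemma sep_nonneg (p : ℕ) (t x : Fin p → ℝ) : 0 ≤ sepIndicator p t x := by
  rw [sep_eq_ite]; split <;> norm_num

lemma sep_le_one (p : ℕ) (t x : Fin p → ℝ) : sepIndicator p t x ≤ 1 := by
  rw [sep_eq_ite]; split <;> norm_num

lemma abs_sep_le_one (p : ℕ) (t x : Fin p → ℝ) : |sepIndicator p t x| ≤ 1 := by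
  rw [abs_le]; exact ⟨by linarith [sep_nonneg p t x], sep_le_one p t x⟩

lemma sep_meas_left (p : ℕ) (x : Fin p → ℝ) :
    Measurable fun t => sepIndicator p t x := by
  unfold sepIndicator
  exact Finset.measurable_prod _ fun j _ =>
    Measurable.ite (measurableSet_le (measurable_pi_apply j) measurable_const)
      measurable_const measurable_const

lemma sep_meas_right (p : ℕ) (t : Fin p → ℝ) :
    Measurable fun x => sepIndicator p t x := by
  unfold sepIndicator
  exact Finset.measurable_prod _ fun j _ =>
    Measurable.ite (measurableSet_le measurable_const (measurable_pi_apply j))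
      measurable_const measurable_const

lemma sep_diff_le (p : ℕ) (t t' x : Fin p → ℝ) (h : ∀ j, t j ≤ t' j) :
    |sepIndicator p t x - sepIndicator p t' x|
      ≤ ∑ j, (if t j ≤ x j ∧ x j < t' j then (1 : ℝ) else 0) := by
  rw [sep_eq_ite, sep_eq_ite]
  by_cases h1 : ∀ j, t j ≤ x j
  · by_cases h2 : ∀ j, t' j ≤ x j
    · simp only [if_pos h1, if_pos h2, sub_self, abs_zero]
      exact Finset.sum_nonneg fun j _ => by split <;> norm_num
    · push_neg at h2
      obtain ⟨j, hj⟩ := h2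
      have h2' : ¬ ∀ j, t' j ≤ x j := fun h' => absurd (h' j) (not_le.mpr hj)
      rw [if_pos h1, if_neg h2', sub_zero, abs_one]
      have : (if t j ≤ x j ∧ x j < t' j then (1:ℝ) else 0)
          ≤ ∑ j, (if t j ≤ x j ∧ x j < t' j then (1 : ℝ) else 0) :=
        Finset.single_le_sum (f := fun j => if t j ≤ x j ∧ x j < t' j then (1:ℝ) else 0)
          (fun j _ => by split <;> norm_num) (Finset.mem_univ j)
      rwa [if_pos ⟨h1 j, hj⟩] at this
  · have h2 : ¬ ∀ j, t' j ≤ x j := by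
      intro h'; exact h1 fun j => le_trans (h j) (h' j)
    simp only [if_neg h1, if_neg h2, sub_self, abs_zero]
    exact Finset.sum_nonneg fun j _ => by split <;> norm_num

noncomputable def gridPt (p N : ℕ) (k : Fin p → Fin N) : Fin p → ℝ := fun j => ((k j : ℝ) + 1) / N

def cell (p N : ℕ) (k : Fin p → Fin N) : Set (Fin p → ℝ) :=
  Set.univ.pi fun j => Set.Ioc ((k j : ℝ)/N) (((k j : ℝ)+1)/N)

def openBox (p : ℕ) : Set (Fin p → ℝ) := Set.univ.pi fun _ => Set.Ioc (0:ℝ) 1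

lemma cell_measurable (p N : ℕ) (k : Fin p → Fin N) : MeasurableSet (cell p N k) :=
  MeasurableSet.univ_pi fun _ => measurableSet_Ioc

lemma openBox_subset_unitBox (p : ℕ) : openBox p ⊆ unitBox p :=
  Set.pi_mono fun _ _ => Set.Ioc_subset_Icc_self

lemma Ioc_iUnion (N : ℕ) (hN : 0 < N) :
    (⋃ m : Fin N, Set.Ioc ((m : ℝ)/N) (((m : ℝ)+1)/N)) = Set.Ioc (0:ℝ) 1 := by
  have hN' : (0:ℝ) < N := by exact_mod_cast hN
  ext s
  simp only [Set.mem_iUnion, Set.mem_Ioc]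
  constructor
  · rintro ⟨m, h1, h2⟩
    have hm0 : (0:ℝ) ≤ (m:ℝ)/N := by positivity
    have hmN : ((m:ℝ)+1)/N ≤ 1 := by
      rw [div_le_one hN']
      have : (m : ℕ) + 1 ≤ N := m.2
      exact_mod_cast this
    exact ⟨lt_of_le_of_lt hm0 h1, le_trans h2 hmN⟩
  · rintro ⟨h0, h1⟩
    have hNt : (0:ℝ) < N * s := by positivity
    have hceil1 : 1 ≤ ⌈(N:ℝ) * s⌉₊ := Nat.one_le_ceil_iff.mpr hNt
    have hceilN : ⌈(N:ℝ) * s⌉₊ ≤ N := by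
      apply Nat.ceil_le.mpr
      calc (N:ℝ) * s ≤ N * 1 := by nlinarith
        _ = (N:ℝ) := by ring
    have hcast : ((⌈(N:ℝ) * s⌉₊ - 1 : ℕ) : ℝ) = (⌈(N:ℝ) * s⌉₊ : ℝ) - 1 := by
      push_cast [hceil1]; ring
    refine ⟨⟨⌈(N:ℝ) * s⌉₊ - 1, by omega⟩, ?_, ?_⟩
    · show ((⌈(N:ℝ) * s⌉₊ - 1 : ℕ) : ℝ)/N < s
      rw [div_lt_iff₀ hN', hcast]
      have := Nat.ceil_lt_add_one (le_of_lt hNt)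
      linarith
    · show s ≤ (((⌈(N:ℝ) * s⌉₊ - 1 : ℕ) : ℝ) + 1)/N
      rw [le_div_iff₀ hN', hcast]
      have := Nat.le_ceil ((N:ℝ) * s)
      linarith

lemma iUnion_cell (p N : ℕ) (hN : 0 < N) :
    (⋃ k : Fin p → Fin N, cell p N k) = openBox p := by
  unfold cell openBox
  rw [Set.iUnion_univ_pi (fun j (m : Fin N) => Set.Ioc ((m : ℝ)/N) (((m : ℝ)+1)/N))]
  exact Set.pi_congr rfl fun j _ => Ioc_iUnion N hN

lemma cell_disjoint (p N : ℕ) : Pairwise (Function.onFun Disjoint (cell p N)) := by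
  intro k k' hkk'
  rw [Function.onFun, Set.disjoint_left]
  intro a ha ha'
  have : ∃ j, k j ≠ k' j := by
    by_contra h; push_neg at h; exact hkk' (funext h)
  obtain ⟨j, hj⟩ := this
  have h1 := Set.mem_univ_pi.mp ha j
  have h2 := Set.mem_univ_pi.mp ha' j
  simp only [Set.mem_Ioc] at h1 h2
  have hN' : (0:ℝ) < N := by
    have := (k j).2; have : 0 < N := by omega
    exact_mod_cast this
  rcases Ne.lt_or_gt (fun h => hj (Fin.ext h) : (k j : ℕ) ≠ (k' j : ℕ)) with h | h
  · have hle : ((k j : ℝ) + 1) ≤ (k' j : ℝ) := by exact_mod_cast h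
    have hd : ((k j : ℝ)+1)/N ≤ (k' j : ℝ)/N := by
      apply div_le_div_of_nonneg_right hle hN'.le
    linarith [h1.2, h2.1]
  · have hle : ((k' j : ℝ) + 1) ≤ (k j : ℝ) := by exact_mod_cast h
    have hd : ((k' j : ℝ)+1)/N ≤ (k j : ℝ)/N := by
      apply div_le_div_of_nonneg_right hle hN'.le
    linarith [h2.2, h1.1]

lemma cell_subset_unitBox (p N : ℕ) (hN : 0 < N) (k : Fin p → Fin N) :
    cell p N k ⊆ unitBox p :=
  (Set.subset_iUnion (cell p N) k).trans
    ((iUnion_cell p N hN).le.trans (openBox_subset_unitBox p))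

lemma gridPt_mem (p N : ℕ) (hN : 0 < N) (k : Fin p → Fin N) : gridPt p N k ∈ unitBox p := by
  have hN' : (0:ℝ) < N := by exact_mod_cast hN
  intro j _
  show (0:ℝ) ≤ ((k j : ℝ) + 1) / N ∧ ((k j : ℝ) + 1) / N ≤ 1
  refine ⟨by positivity, ?_⟩
  rw [div_le_one hN']
  have : (k j : ℕ) + 1 ≤ N := (k j).2
  exact_mod_cast this

lemma openBox_ae_eq_unitBox (p : ℕ) :
    openBox p =ᵐ[(volume : Measure (Fin p → ℝ))] unitBox p := by
  have h := MeasureTheory.Measure.univ_pi_Ioc_ae_eq_Icc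
      (μ := fun _ : Fin p => (volume : Measure ℝ)) (f := fun _ => (0:ℝ)) (g := fun _ => 1)
  rw [← Set.pi_univ_Icc, ← MeasureTheory.volume_pi] at h
  exact h

lemma integral_box_eq_sum (p N : ℕ) (hN : 0 < N) (g : (Fin p → ℝ) → ℝ)
    (hg : IntegrableOn g (unitBox p) volume) :
    ∫ t in unitBox p, g t ∂volume = ∑ k : Fin p → Fin N, ∫ t in cell p N k, g t ∂volume := by
  have h1 : ∫ t in unitBox p, g t ∂volume = ∫ t in openBox p, g t ∂volume :=
    (setIntegral_congr_set (openBox_ae_eq_unitBox p)).symm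
  rw [h1, ← iUnion_cell p N hN]
  exact integral_iUnion_fintype (cell_measurable p N) (cell_disjoint p N)
    (fun k => hg.mono_set (cell_subset_unitBox p N hN k))

lemma integrable_mul_bdd {p : ℕ} {c : (Fin p → ℝ) → ℝ} {s : Set (Fin p → ℝ)}
    (hc : IntegrableOn c s volume) (φ : (Fin p → ℝ) → ℝ) (M : ℝ)
    (hφ : Measurable φ) (hM : ∀ t, |φ t| ≤ M) :
    IntegrableOn (fun t => c t * φ t) s volume := by
  apply Integrable.mono' (hc.abs.mul_const M) (hc.1.mul hφ.aestronglyMeasurable)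
  filter_upwards with t
  show ‖c t * φ t‖ ≤ |c t| * M
  rw [norm_mul]
  simp only [Real.norm_eq_abs]
  exact mul_le_mul_of_nonneg_left (hM t) (abs_nonneg _)

lemma ite_meas (p : ℕ) (x : Fin p → ℝ) (a : ℝ) (j : Fin p) :
    Measurable (fun t : Fin p → ℝ => if x j - a < t j ∧ t j ≤ x j then (1:ℝ) else 0) := by
  refine Measurable.ite ?_ measurable_const measurable_const
  rw [Set.setOf_and]
  exact (measurableSet_lt measurable_const (measurable_pi_apply j)).inter
    (measurableSet_le (measurable_pi_apply j) measurable_const)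

lemma ite_abs_le (p : ℕ) (x : Fin p → ℝ) (a : ℝ) (j : Fin p) (t : Fin p → ℝ) :
    |if x j - a < t j ∧ t j ≤ x j then (1:ℝ) else 0| ≤ 1 := by
  split <;> norm_num

lemma keybound (p : ℕ) (c : (Fin p → ℝ) → ℝ) (hc : IntegrableOn c (unitBox p) volume)
    (n : ℕ) (x : Fin p → ℝ) :
    |(∫ t in unitBox p, c t * sepIndicator p t x ∂volume)
        - ∑ k : Fin p → Fin (n+1), (∫ t in cell p (n+1) k, c t ∂volume)
            * sepIndicator p (gridPt p (n+1) k) x|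
      ≤ ∑ j : Fin p, ∫ t in unitBox p,
          |c t| * (if x j - 1/((n:ℝ)+1) < t j ∧ t j ≤ x j then (1:ℝ) else 0) ∂volume := by
  have hN : 0 < n + 1 := Nat.succ_pos n
  have hNR : (0:ℝ) < ((n+1 : ℕ):ℝ) := by exact_mod_cast hN
  set D : (Fin p → ℝ) → ℝ :=
    fun t => ∑ j, (if x j - 1/((n:ℝ)+1) < t j ∧ t j ≤ x j then (1:ℝ) else 0) with hD
  have hDmeas : Measurable D := Finset.measurable_sum _ fun j _ => ite_meas p x _ j
  have hDnonneg : ∀ t, 0 ≤ D t := fun t =>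
    Finset.sum_nonneg fun j _ => by split <;> norm_num
  have hDle : ∀ t, D t ≤ p := by
    intro t
    calc D t ≤ ∑ _j : Fin p, (1:ℝ) :=
          Finset.sum_le_sum fun j _ => by split <;> norm_num
      _ = p := by simp
  have hDabs : ∀ t, |D t| ≤ (p:ℝ) := fun t => by
    rw [abs_of_nonneg (hDnonneg t)]; exact hDle t
  have hint : IntegrableOn (fun t => c t * sepIndicator p t x) (unitBox p) volume :=
    integrable_mul_bdd hc _ 1 (sep_meas_left p x) (fun t => abs_sep_le_one p t x)
  have hintD : IntegrableOn (fun t => |c t| * D t) (unitBox p) volume :=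
    integrable_mul_bdd hc.abs D p hDmeas hDabs
  have h1 : (∫ t in unitBox p, c t * sepIndicator p t x ∂volume)
      = ∑ k : Fin p → Fin (n+1), ∫ t in cell p (n+1) k, c t * sepIndicator p t x ∂volume :=
    integral_box_eq_sum p (n+1) hN _ hint
  have h2 : ∀ k : Fin p → Fin (n+1),
      (∫ t in cell p (n+1) k, c t ∂volume) * sepIndicator p (gridPt p (n+1) k) x
      = ∫ t in cell p (n+1) k, c t * sepIndicator p (gridPt p (n+1) k) x ∂volume :=
    fun k => (integral_mul_const _ _).symm
  have h3 : (∫ t in unitBox p, c t * sepIndicator p t x ∂volume)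
        - ∑ k : Fin p → Fin (n+1), (∫ t in cell p (n+1) k, c t ∂volume)
            * sepIndicator p (gridPt p (n+1) k) x
      = ∑ k : Fin p → Fin (n+1), ∫ t in cell p (n+1) k,
          (c t * sepIndicator p t x - c t * sepIndicator p (gridPt p (n+1) k) x) ∂volume := by
    rw [h1, ← Finset.sum_sub_distrib]
    refine Finset.sum_congr rfl fun k _ => ?_
    rw [h2 k, ← integral_sub (hint.mono_set (cell_subset_unitBox p (n+1) hN k))
      ((hc.mono_set (cell_subset_unitBox p (n+1) hN k)).mul_const _)]
  have hcellbd : ∀ k : Fin p → Fin (n+1), ∀ t ∈ cell p (n+1) k,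
      ‖c t * sepIndicator p t x - c t * sepIndicator p (gridPt p (n+1) k) x‖ ≤ |c t| * D t := by
    intro k t ht
    have htj : ∀ j, ((k j : ℝ))/((n+1:ℕ):ℝ) < t j ∧ t j ≤ ((k j : ℝ)+1)/((n+1:ℕ):ℝ) := by
      intro j
      have := Set.mem_univ_pi.mp ht j
      simpa [Set.mem_Ioc] using this
    have hord : ∀ j, t j ≤ gridPt p (n+1) k j := fun j => (htj j).2
    have hdiff : |sepIndicator p t x - sepIndicator p (gridPt p (n+1) k) x| ≤ D t := by
      refine (sep_diff_le p t _ x hord).trans ?_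
      rw [hD]
      refine Finset.sum_le_sum fun j _ => ?_
      split
      · next hcond =>
          rw [if_pos]
          refine ⟨?_, hcond.1⟩
          have hg : x j < ((k j : ℝ)+1)/((n+1:ℕ):ℝ) := hcond.2
          have hsplit : ((k j : ℝ)+1)/((n+1:ℕ):ℝ)
              = (k j : ℝ)/((n+1:ℕ):ℝ) + 1/((n+1:ℕ):ℝ) := by ring
          have hcast : ((n+1:ℕ):ℝ) = (n:ℝ)+1 := by push_cast; ring
          rw [← hcast]
          linarith [(htj j).1]
      · next _ => split <;> norm_num
    rw [← mul_sub, norm_mul]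
    simp only [Real.norm_eq_abs]
    exact mul_le_mul_of_nonneg_left hdiff (abs_nonneg _)
  calc |(∫ t in unitBox p, c t * sepIndicator p t x ∂volume)
        - ∑ k : Fin p → Fin (n+1), (∫ t in cell p (n+1) k, c t ∂volume)
            * sepIndicator p (gridPt p (n+1) k) x|
      ≤ ∑ k : Fin p → Fin (n+1), |∫ t in cell p (n+1) k,
          (c t * sepIndicator p t x - c t * sepIndicator p (gridPt p (n+1) k) x) ∂volume| := by
        rw [h3]; exact Finset.abs_sum_le_sum_abs _ _
    _ ≤ ∑ k : Fin p → Fin (n+1), ∫ t in cell p (n+1) k, |c t| * D t ∂volume := by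
        refine Finset.sum_le_sum fun k _ => ?_
        have hsub := cell_subset_unitBox p (n+1) hN k
        have hgint : IntegrableOn (fun t =>
            c t * sepIndicator p t x - c t * sepIndicator p (gridPt p (n+1) k) x)
            (cell p (n+1) k) volume :=
          (hint.mono_set hsub).sub ((hc.mono_set hsub).mul_const _)
        have e1 := norm_integral_le_integral_norm (μ := volume.restrict (cell p (n+1) k))
          (f := fun t => c t * sepIndicator p t x - c t * sepIndicator p (gridPt p (n+1) k) x)
        rw [Real.norm_eq_abs] at e1
        refine e1.trans ?_
        exact setIntegral_mono_on hgint.norm (hintD.mono_set hsub)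
          (cell_measurable p (n+1) k) (hcellbd k)
    _ = ∫ t in unitBox p, |c t| * D t ∂volume := (integral_box_eq_sum p (n+1) hN _ hintD).symm
    _ = ∑ j : Fin p, ∫ t in unitBox p,
          |c t| * (if x j - 1/((n:ℝ)+1) < t j ∧ t j ≤ x j then (1:ℝ) else 0) ∂volume := by
        simp only [hD, Finset.mul_sum]
        exact integral_finset_sum _ fun j _ =>
          integrable_mul_bdd hc.abs _ 1 (ite_meas p x _ j) (ite_abs_le p x _ j)


lemma boundTendsto (p : ℕ) (c : (Fin p → ℝ) → ℝ)
    (hc : IntegrableOn c (unitBox p) volume) (x : Fin p → ℝ) :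
    Tendsto (fun n : ℕ => ∑ j : Fin p, ∫ t in unitBox p,
        |c t| * (if x j - 1/((n:ℝ)+1) < t j ∧ t j ≤ x j then (1:ℝ) else 0) ∂volume)
      atTop (nhds 0) := by
  have hbox : MeasurableSet (unitBox p) := MeasurableSet.univ_pi fun _ => measurableSet_Icc
  have key : ∀ j : Fin p, Tendsto (fun n : ℕ => ∫ t in unitBox p,
      |c t| * (if x j - 1/((n:ℝ)+1) < t j ∧ t j ≤ x j then (1:ℝ) else 0) ∂volume)
      atTop (nhds 0) := by
    intro j
    set ν : Measure (Fin p → ℝ) :=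
      (volume.restrict (unitBox p)).withDensity (fun t => (‖c t‖₊ : ENNReal)) with hν
    set S : ℕ → Set (Fin p → ℝ) :=
      fun n => {t | x j - 1/((n:ℝ)+1) < t j ∧ t j ≤ x j} with hS
    have hSmeas : ∀ n, MeasurableSet (S n) := by
      intro n
      rw [hS]
      dsimp only
      rw [Set.setOf_and]
      exact (measurableSet_lt measurable_const (measurable_pi_apply j)).inter
        (measurableSet_le (measurable_pi_apply j) measurable_const)
    have hanti : Antitone S := by
      intro m n hmn t ht
      obtain ⟨h1, h2⟩ := ht
      refine ⟨lt_of_le_of_lt ?_ h1, h2⟩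
      have hmn' : ((m:ℝ)+1) ≤ (n:ℝ)+1 := by exact_mod_cast Nat.succ_le_succ hmn
      have : (1:ℝ)/((n:ℝ)+1) ≤ 1/((m:ℝ)+1) := by
        apply one_div_le_one_div_of_le (by positivity) hmn'
      linarith
    have hfin : IsFiniteMeasure ν := by
      constructor
      rw [hν, withDensity_apply _ MeasurableSet.univ, Measure.restrict_univ]
      exact hc.2
    have htend := tendsto_measure_iInter_atTop
      (μ := ν) (fun n => (hSmeas n).nullMeasurableSet) hanti ⟨0, measure_ne_top ν _⟩
    have hnull : ν (⋂ n, S n) = 0 := by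
      have hsub : (⋂ n, S n) ⊆ {t : Fin p → ℝ | t j = x j} := by
        intro t ht
        have h1 : ∀ n : ℕ, x j - 1/((n:ℝ)+1) < t j := fun n => (Set.mem_iInter.mp ht n).1
        have h2 : t j ≤ x j := (Set.mem_iInter.mp ht 0).2
        have h3 : x j ≤ t j := by
          by_contra hcon
          push_neg at hcon
          obtain ⟨n, hn⟩ := exists_nat_one_div_lt (by linarith : (0:ℝ) < x j - t j)
          have := h1 n
          linarith
        exact le_antisymm h2 h3
      have hvol : (volume : Measure (Fin p → ℝ)) {t : Fin p → ℝ | t j = x j} = 0 := by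
        rw [MeasureTheory.volume_pi]
        exact MeasureTheory.Measure.pi_hyperplane (fun _ => (volume : Measure ℝ)) j (x j)
      refine measure_mono_null hsub ?_
      rw [hν]
      exact (withDensity_absolutelyContinuous _ _)
        ((Measure.absolutelyContinuous_of_le Measure.restrict_le_self) hvol)
    rw [hnull] at htend
    have htoReal : Tendsto (fun n => (ν (S n)).toReal) atTop (nhds 0) := by
      have := (ENNReal.tendsto_toReal (a := 0) (by simp)).comp htend
      exact this
    have hval : ∀ n : ℕ, (∫ t in unitBox p,
        |c t| * (if x j - 1/((n:ℝ)+1) < t j ∧ t j ≤ x j then (1:ℝ) else 0) ∂volume)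
        = (ν (S n)).toReal := by
      intro n
      have hind : (fun t : Fin p → ℝ =>
          |c t| * (if x j - 1/((n:ℝ)+1) < t j ∧ t j ≤ x j then (1:ℝ) else 0))
          = (S n).indicator (fun t => |c t|) := by
        funext t
        by_cases h : x j - 1/((n:ℝ)+1) < t j ∧ t j ≤ x j
        · rw [Set.indicator_of_mem (show t ∈ S n from h), if_pos h, mul_one]
        · rw [Set.indicator_of_notMem (show t ∉ S n from h), if_neg h, mul_zero]
      rw [hind, integral_indicator (hSmeas n)]
      rw [integral_eq_lintegral_of_nonneg_ae
        (Filter.Eventually.of_forall fun t => abs_nonneg (c t)) (hc.abs.1.restrict)]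
      congr 1
      rw [hν, withDensity_apply _ (hSmeas n)]
      refine lintegral_congr fun t => ?_
      rw [← Real.norm_eq_abs, ofReal_norm, enorm_eq_nnnorm]
    have := htoReal.congr (fun n => (hval n).symm)
    exact this
  have := tendsto_finset_sum (Finset.univ : Finset (Fin p)) (fun j _ => key j)
  simpa using this


end VCC

open Filter

/-- **Variation-class certificate.** If `f ∈ L²(P)` satisfies the anchored
representation `f(x) = ∫_{[0,1]^p} c(t) h_t(x) dt` for `P`-a.e. `x`, with
`c ∈ L¹([0,1]^p)`, then for every `ε > 0` there is a finite signed combination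
`Σ_k λ_k h_{t_k}` of separable indicator products, with points
`t_k ∈ [0,1]^p` and `Σ_k |λ_k| ≤ ‖c‖_{L¹([0,1]^p)}`, that approximates `f` in
`L²(P)`-norm within `ε`. -/
theorem variation_class_certificate
    (p : ℕ) (P : Measure (Fin p → ℝ)) [IsProbabilityMeasure P]
    (c : (Fin p → ℝ) → ℝ)
    (hc : IntegrableOn c (unitBox p) volume)
    (f : (Fin p → ℝ) → ℝ)
    (hf2 : MemLp f 2 P)
    (hf : ∀ᵐ x ∂P, f x = ∫ t in unitBox p, c t * sepIndicator p t x ∂volume) :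
    ∀ ε > (0 : ℝ), ∃ (n : ℕ) (t : Fin n → Fin p → ℝ) (lam : Fin n → ℝ),
      (∀ k, t k ∈ unitBox p) ∧
      (∑ k, |lam k|) ≤ (∫ u in unitBox p, |c u| ∂volume) ∧
      eLpNorm (fun x => f x - ∑ k, lam k * sepIndicator p (t k) x) 2 P
        < ENNReal.ofReal ε := by
  classical
  intro ε hε
  set I : ℝ := ∫ u in unitBox p, |c u| ∂volume with hIdef
  have hI0 : 0 ≤ I := by
    rw [hIdef]; exact integral_nonneg fun t => abs_nonneg _
  set G : ℕ → (Fin p → ℝ) → ℝ := fun n x =>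
    ∑ k : Fin p → Fin (n+1), (∫ t in VCC.cell p (n+1) k, c t ∂volume)
      * sepIndicator p (VCC.gridPt p (n+1) k) x with hG
  have hlam_sum : ∀ n : ℕ,
      ∑ k : Fin p → Fin (n+1), |∫ t in VCC.cell p (n+1) k, c t ∂volume| ≤ I := by
    intro n
    have h1 : ∀ k : Fin p → Fin (n+1),
        |∫ t in VCC.cell p (n+1) k, c t ∂volume|
          ≤ ∫ t in VCC.cell p (n+1) k, |c t| ∂volume := by
      intro k
      have := norm_integral_le_integral_norm (μ := volume.restrict (VCC.cell p (n+1) k)) (f := c)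
      simpa [Real.norm_eq_abs] using this
    refine le_trans (Finset.sum_le_sum fun k _ => h1 k) ?_
    rw [hIdef]
    exact (VCC.integral_box_eq_sum p (n+1) (Nat.succ_pos n) _ hc.abs).symm.le
  have hGle : ∀ n x, |G n x| ≤ I := by
    intro n x
    refine le_trans (Finset.abs_sum_le_sum_abs _ _) ?_
    refine le_trans (Finset.sum_le_sum (fun k (_ : k ∈ Finset.univ) => ?_)) (hlam_sum n)
    rw [abs_mul]
    calc |∫ t in VCC.cell p (n+1) k, c t ∂volume| * |sepIndicator p (VCC.gridPt p (n+1) k) x|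
        ≤ |∫ t in VCC.cell p (n+1) k, c t ∂volume| * 1 :=
          mul_le_mul_of_nonneg_left (VCC.abs_sep_le_one p _ x) (abs_nonneg _)
      _ = |∫ t in VCC.cell p (n+1) k, c t ∂volume| := mul_one _
  have hGmeas : ∀ n, Measurable (G n) := by
    intro n
    exact Finset.measurable_sum _ fun k _ => (VCC.sep_meas_right p _).const_mul _
  have hFxle : ∀ x, |∫ t in unitBox p, c t * sepIndicator p t x ∂volume| ≤ I := by
    intro x
    have h1 := norm_integral_le_integral_norm (μ := volume.restrict (unitBox p))
      (f := fun t => c t * sepIndicator p t x)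
    rw [Real.norm_eq_abs] at h1
    refine h1.trans ?_
    rw [hIdef]
    refine integral_mono ((VCC.integrable_mul_bdd hc _ 1 (VCC.sep_meas_left p x)
      (fun t => VCC.abs_sep_le_one p t x)).norm) hc.abs ?_
    intro t
    show ‖c t * sepIndicator p t x‖ ≤ |c t|
    rw [norm_mul]
    simp only [Real.norm_eq_abs]
    calc |c t| * |sepIndicator p t x| ≤ |c t| * 1 :=
          mul_le_mul_of_nonneg_left (VCC.abs_sep_le_one p t x) (abs_nonneg _)
      _ = |c t| := mul_one _
  have hae : ∀ᵐ x ∂P, Tendsto (fun n => f x - G n x) atTop (nhds 0) := by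
    filter_upwards [hf] with x hx
    rw [hx]
    refine squeeze_zero_norm (fun n => ?_) (VCC.boundTendsto p c hc x)
    rw [Real.norm_eq_abs]
    simpa only [hG] using VCC.keybound p c hc n x
  have habd : ∀ n : ℕ, ∀ᵐ x ∂P,
      ((‖f x - G n x‖₊ : ENNReal))^2 ≤ ENNReal.ofReal ((2*I)^2) := by
    intro n
    filter_upwards [hf] with x hx
    have h1 : |f x - G n x| ≤ 2*I := by
      rw [hx]
      have e1 := hFxle x
      have e2 := hGle n x
      calc |(∫ t in unitBox p, c t * sepIndicator p t x ∂volume) - G n x|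
          ≤ |∫ t in unitBox p, c t * sepIndicator p t x ∂volume| + |G n x| := by
            rw [sub_eq_add_neg]
            refine (abs_add_le _ _).trans ?_
            rw [abs_neg]
        _ ≤ 2*I := by linarith
    have h2 : (‖f x - G n x‖₊ : ENNReal) ≤ ENNReal.ofReal (2*I) := by
      rw [← enorm_eq_nnnorm, ← ofReal_norm]
      exact ENNReal.ofReal_le_ofReal (by rwa [Real.norm_eq_abs])
    calc ((‖f x - G n x‖₊ : ENNReal))^2 ≤ (ENNReal.ofReal (2*I))^2 :=
          pow_le_pow_left₀ zero_le h2 2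
      _ = ENNReal.ofReal ((2*I)^2) := (ENNReal.ofReal_pow (by linarith) 2).symm
  have hmeasF : ∀ n, AEMeasurable (fun x => ((‖f x - G n x‖₊ : ENNReal))^2) P := by
    intro n
    exact ((hf2.1.sub (hGmeas n).aestronglyMeasurable).enorm).pow_const 2
  have hlim : ∀ᵐ x ∂P, Tendsto (fun n => ((‖f x - G n x‖₊ : ENNReal))^2) atTop (nhds 0) := by
    filter_upwards [hae] with x hx
    have h1 : Tendsto (fun n => (‖f x - G n x‖₊ : NNReal)) atTop (nhds 0) := by
      simpa using hx.nnnorm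
    have h3 := ENNReal.tendsto_coe.2 (h1.pow 2)
    simpa [ENNReal.coe_pow] using h3
  have hdct : Tendsto (fun n => ∫⁻ x, ((‖f x - G n x‖₊ : ENNReal))^2 ∂P) atTop (nhds 0) := by
    have h := tendsto_lintegral_of_dominated_convergence' (μ := P)
      (F := fun n x => ((‖f x - G n x‖₊ : ENNReal))^2) (f := fun _ => 0)
      (fun _ => ENNReal.ofReal ((2*I)^2)) hmeasF habd
      (by simp [lintegral_const]) hlim
    simpa using h
  have hδpos : (0:ENNReal) < (ENNReal.ofReal ε)^2 :=
    ENNReal.pow_pos (ENNReal.ofReal_pos.mpr hε) 2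
  obtain ⟨n, hn⟩ := (hdct.eventually_lt_const hδpos).exists
  set e := Fintype.equivFin (Fin p → Fin (n+1)) with he
  refine ⟨Fintype.card (Fin p → Fin (n+1)),
    fun m => VCC.gridPt p (n+1) (e.symm m),
    fun m => ∫ t in VCC.cell p (n+1) (e.symm m), c t ∂volume, ?_, ?_, ?_⟩
  · intro m; exact VCC.gridPt_mem p (n+1) (Nat.succ_pos n) _
  · refine le_trans (le_of_eq (Fintype.sum_equiv e.symm _ _ (fun m => rfl))) (hlam_sum n)
  · have hfun : (fun x => f x - ∑ m, (∫ t in VCC.cell p (n+1) (e.symm m), c t ∂volume)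
        * sepIndicator p (VCC.gridPt p (n+1) (e.symm m)) x) = fun x => f x - G n x := by
      funext x
      congr 1
      simp only [hG]
      exact Fintype.sum_equiv e.symm _ _ (fun m => rfl)
    rw [hfun]
    rw [MeasureTheory.eLpNorm_eq_lintegral_rpow_enorm_toReal (by norm_num) (by norm_num)]
    rw [show ((2:ENNReal)).toReal = (2:ℝ) from by norm_num]
    have hrw : ∀ a : ENNReal, a ^ (2:ℝ) = a^(2:ℕ) := fun a => by
      rw [← ENNReal.rpow_natCast]; norm_num
    calc (∫⁻ x, ((‖f x - G n x‖₊ : ENNReal)) ^ (2:ℝ) ∂P) ^ ((1:ℝ)/(2:ℝ))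
        = (∫⁻ x, ((‖f x - G n x‖₊ : ENNReal)) ^ (2:ℕ) ∂P) ^ ((1:ℝ)/(2:ℝ)) := by
          congr 1; exact lintegral_congr fun x => hrw _
      _ < ((ENNReal.ofReal ε)^2) ^ ((1:ℝ)/(2:ℝ)) := ENNReal.rpow_lt_rpow hn (by norm_num)
      _ = ENNReal.ofReal ε := by
          rw [← ENNReal.rpow_natCast (ENNReal.ofReal ε) 2, ← ENNReal.rpow_mul]
          norm_num
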